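/- Under the stated assumptions, the additive Schwarz operator T = ∑_{k=0}^N T_k satisfies the norm bound ‖Tu‖_a ≤ β_2 ‖u‖_a for all u ∈ V^h, with β_2 = 2M(1 + ρ(ℰ)). -/

import Mathlib

open scoped RealInnerProductSpace

/-- The additive Schwarz operator `T = ∑_{k=0}^N T_k`, where
`a(T_k u, v) = a_h(u, v)` for all `v ∈ V_k`, satisfies `‖Tu‖_a ≤ β₂ ‖u‖_a` with
`β₂ = 2M(1 + ρ(ℰ))` (spectral radius of the symmetric Cauchy–Schwarz matrix `ℰ`,
which equals its Euclidean operator norm). -/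
theorem stmt4 {V : Type*} [NormedAddCommGroup V] [InnerProductSpace ℝ V]
    [FiniteDimensional ℝ V]
    (N : ℕ) (Vs : Fin (N + 1) → Submodule ℝ V)
    (a_h : V →ₗ[ℝ] V →ₗ[ℝ] ℝ) (M : ℝ) (hM : 0 < M)
    (hbound : ∀ u v : V, |a_h u v| ≤ M * ‖u‖ * ‖v‖)
    (T : Fin (N + 1) → V →ₗ[ℝ] V)
    (hTmem : ∀ k u, T k u ∈ Vs k)
    (hTdef : ∀ k u, ∀ v ∈ Vs k, ⟪T k u, v⟫ = a_h u v)
    (ε : Matrix (Fin N) (Fin N) ℝ) (hεsymm : ε.IsSymm) (hεnonneg : ∀ k l, 0 ≤ ε k l)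
    (hCS : ∀ k l : Fin N, ∀ v ∈ Vs k.succ, ∀ w ∈ Vs l.succ,
      ⟪v, w⟫ ≤ ε k l * ‖v‖ * ‖w‖) :
    ∀ u : V, ‖∑ k, T k u‖ ≤
      2 * M * (1 + ‖Matrix.toEuclideanCLM (𝕜 := ℝ) ε‖) * ‖u‖ := by
  intro u
  set ρ := ‖Matrix.toEuclideanCLM (𝕜 := ℝ) ε‖ with hρ
  have hρ0 : 0 ≤ ρ := norm_nonneg _
  have hu0 : 0 ≤ ‖u‖ := norm_nonneg u
  -- each component bound
  have hTk : ∀ k, ‖T k u‖ ≤ M * ‖u‖ := by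
    intro k
    have h1 : ‖T k u‖ ^ 2 = a_h u (T k u) := by
      rw [← hTdef k u (T k u) (hTmem k u), real_inner_self_eq_norm_sq]
    have h2 : a_h u (T k u) ≤ M * ‖u‖ * ‖T k u‖ :=
      le_trans (le_abs_self _) (hbound u _)
    nlinarith [norm_nonneg (T k u), mul_nonneg hM.le hu0]
  set w := ∑ k : Fin N, T k.succ u with hw
  have hsum : ∑ k, T k u = T 0 u + w := by rw [Fin.sum_univ_succ]
  -- the vector of norms
  set x : EuclideanSpace ℝ (Fin N) := WithLp.toLp 2 (fun k : Fin N => ‖T k.succ u‖) with hx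
  have hxsq : ‖x‖ ^ 2 = ∑ k : Fin N, ‖T k.succ u‖ ^ 2 := by
    rw [← real_inner_self_eq_norm_sq, PiLp.inner_apply]
    simp [PiLp.inner_apply, hx, sq]
  -- ‖w‖² ≤ ρ * ∑ ‖T k.succ u‖²
  have hA : ‖w‖ ^ 2 ≤ ρ * ∑ k : Fin N, ‖T k.succ u‖ ^ 2 := by
    have e1 : ‖w‖ ^ 2 = ∑ k : Fin N, ∑ l : Fin N, ⟪T k.succ u, T l.succ u⟫ := by
      rw [← real_inner_self_eq_norm_sq, hw, sum_inner]
      exact Finset.sum_congr rfl fun k _ => by rw [inner_sum]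
    have e2 : ∑ k : Fin N, ∑ l : Fin N, ⟪T k.succ u, T l.succ u⟫ ≤
        ∑ k : Fin N, ∑ l : Fin N, ε k l * x k * x l := by
      refine Finset.sum_le_sum fun k _ => Finset.sum_le_sum fun l _ => ?_
      exact hCS k l _ (hTmem k.succ u) _ (hTmem l.succ u)
    have e3 : ∑ k : Fin N, ∑ l : Fin N, ε k l * x k * x l =
        ⟪Matrix.toEuclideanCLM (𝕜 := ℝ) ε x, x⟫ := by
      have happ : ∀ k, (Matrix.toEuclideanCLM (𝕜 := ℝ) ε x) k = ∑ l, ε k l * x l := by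
        intro k
        rfl
      simp only [PiLp.inner_apply, RCLike.inner_apply, starRingEnd_apply, star_trivial, happ]
      rw [Finset.sum_comm]
      refine Finset.sum_congr rfl fun k _ => ?_
      rw [mul_comm, Finset.sum_mul]
      refine Finset.sum_congr rfl fun l _ => ?_
      rw [hεsymm.apply l k]
    have e4 : ⟪Matrix.toEuclideanCLM (𝕜 := ℝ) ε x, x⟫ ≤ ρ * ‖x‖ ^ 2 := by
      calc ⟪Matrix.toEuclideanCLM (𝕜 := ℝ) ε x, x⟫
          ≤ ‖Matrix.toEuclideanCLM (𝕜 := ℝ) ε x‖ * ‖x‖ := real_inner_le_norm _ _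
        _ ≤ (ρ * ‖x‖) * ‖x‖ := by
            have := (Matrix.toEuclideanCLM (𝕜 := ℝ) ε).le_opNorm x
            exact mul_le_mul_of_nonneg_right this (norm_nonneg x)
        _ = ρ * ‖x‖ ^ 2 := by ring
    calc ‖w‖ ^ 2 ≤ ρ * ‖x‖ ^ 2 := by rw [e1]; exact le_trans e2 (e3 ▸ e4)
      _ = ρ * ∑ k : Fin N, ‖T k.succ u‖ ^ 2 := by rw [hxsq]
  -- ∑ ‖T k.succ u‖² ≤ M ‖u‖ ‖w‖
  have hB : ∑ k : Fin N, ‖T k.succ u‖ ^ 2 ≤ M * ‖u‖ * ‖w‖ := by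
    have e1 : ∑ k : Fin N, ‖T k.succ u‖ ^ 2 = a_h u w := by
      rw [hw, map_sum]
      exact Finset.sum_congr rfl fun k _ => by
        rw [← hTdef k.succ u (T k.succ u) (hTmem k.succ u), real_inner_self_eq_norm_sq]
    rw [e1]
    exact le_trans (le_abs_self _) (hbound u w)
  -- hence ‖w‖ ≤ ρ M ‖u‖
  have hwb : ‖w‖ ≤ ρ * (M * ‖u‖) := by
    have h1 : ‖w‖ ^ 2 ≤ ρ * (M * ‖u‖ * ‖w‖) :=
      le_trans hA (mul_le_mul_of_nonneg_left hB hρ0)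
    nlinarith [norm_nonneg w, mul_nonneg hρ0 (mul_nonneg hM.le hu0)]
  calc ‖∑ k, T k u‖ = ‖T 0 u + w‖ := by rw [hsum]
    _ ≤ ‖T 0 u‖ + ‖w‖ := norm_add_le _ _
    _ ≤ 2 * M * (1 + ρ) * ‖u‖ := by nlinarith [hTk 0, mul_nonneg hM.le hu0]
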